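/- Under the described setup, suppose additionally that there exists ε ≥ 0 such that |E[r(a) | X] − f*(X, a)| ≤ ε almost surely for every a ∈ 𝒜 (ε-misspecification). Then Var[Y] ≤ 8·E[Y] + 16·ε². -/

import Mathlib

open MeasureTheory ProbabilityTheory Filter

namespace ExcessLossAux

variable {Ω : Type*} {m mΩ : MeasurableSpace Ω} {μ : Measure Ω} [IsProbabilityMeasure μ]

lemma integrable_of_bdd {g : Ω → ℝ} {C : ℝ} (hg : AEStronglyMeasurable g μ)
    (h : ∀ ω, |g ω| ≤ C) : Integrable g μ :=
  ⟨hg, HasFiniteIntegral.of_bounded (C := C) (ae_of_all _ fun ω => by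
    simpa [Real.norm_eq_abs] using h ω)⟩

lemma condexp_abs_le (hm : m ≤ mΩ) {g : Ω → ℝ} {C : ℝ}
    (hg : Integrable g μ) (h : ∀ᵐ ω ∂μ, |g ω| ≤ C) :
    ∀ᵐ ω ∂μ, |(μ[g|m]) ω| ≤ C := by
  have h1 : μ[g|m] ≤ᵐ[μ] μ[(fun _ => C)|m] :=
    condExp_mono hg (integrable_const _) (h.mono fun ω hω => (abs_le.1 hω).2)
  have h2 : μ[(fun _ => -C)|m] ≤ᵐ[μ] μ[g|m] :=
    condExp_mono (integrable_const _) hg (h.mono fun ω hω => (abs_le.1 hω).1)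
  have hc1 := condExp_const (μ := μ) hm C
  have hc2 := condExp_const (μ := μ) hm (-C)
  filter_upwards [h1, h2] with ω e1 e2
  rw [abs_le]
  constructor
  · calc -C = (μ[(fun _ => -C)|m]) ω := (congrFun hc2 ω).symm
    _ ≤ _ := e2
  · calc (μ[g|m]) ω ≤ (μ[(fun _ => C)|m]) ω := e1
    _ = C := congrFun hc1 ω

lemma abs_indicator_one_le {A : Set Ω} (ω : Ω) : |A.indicator (fun _ => (1:ℝ)) ω| ≤ 1 := by
  by_cases h : ω ∈ A <;> simp [h]

lemma atomic (hm : m ≤ mΩ)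
    {A B : Set Ω} (hA : MeasurableSet A) (hB : MeasurableSet B)
    {d : Ω → ℝ} (hd : Measurable[m] d) (hd1 : ∀ ω, |d ω| ≤ 1)
    (hprod : (μ⟦A ∩ B | m⟧) =ᵐ[μ] (μ⟦A | m⟧) * (μ⟦B | m⟧)) :
    ∫ ω, d ω * (A.indicator (fun _ => (1:ℝ)) ω * B.indicator (fun _ => (1:ℝ)) ω) ∂μ
      = ∫ ω, d ω * (A.indicator (fun _ => (1:ℝ)) ω * (μ⟦B | m⟧) ω) ∂μ := by
  have hdm : Measurable d := hd.mono hm le_rfl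
  set e := μ⟦A | m⟧ with he
  set q := μ⟦B | m⟧ with hq
  have iA : Integrable (A.indicator (fun _ => (1:ℝ))) μ := (integrable_const 1).indicator hA
  have iB : Integrable (B.indicator (fun _ => (1:ℝ))) μ := (integrable_const 1).indicator hB
  have iAB : Integrable ((A ∩ B).indicator (fun _ => (1:ℝ))) μ :=
    (integrable_const 1).indicator (hA.inter hB)
  have hindAB : ∀ ω, A.indicator (fun _ => (1:ℝ)) ω * B.indicator (fun _ => (1:ℝ)) ω
      = (A ∩ B).indicator (fun _ => (1:ℝ)) ω := by
    intro ω
    by_cases h1 : ω ∈ A <;> by_cases h2 : ω ∈ B <;>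
      simp [Set.indicator_apply, h1, h2]
  have hdbd : ∀ᵐ ω ∂μ, ‖d ω‖ ≤ 1 := ae_of_all _ fun ω => by
    simpa [Real.norm_eq_abs] using hd1 ω
  -- left side
  have idm : Integrable (d * (A ∩ B).indicator (fun _ => (1:ℝ))) μ := by
    refine integrable_of_bdd (C := 1)
      ((hdm.mul (measurable_const.indicator (hA.inter hB))).aestronglyMeasurable) fun ω => ?_
    simp only [Pi.mul_apply, abs_mul]
    calc |d ω| * |(A ∩ B).indicator (fun _ => (1:ℝ)) ω| ≤ 1 * 1 :=
          mul_le_mul (hd1 ω) (abs_indicator_one_le ω) (abs_nonneg _) zero_le_one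
    _ = 1 := by norm_num
  have l2 : μ[d * (A ∩ B).indicator (fun _ => (1:ℝ)) | m]
      =ᵐ[μ] d * μ[(A ∩ B).indicator (fun _ => (1:ℝ)) | m] :=
    condExp_stronglyMeasurable_mul_of_bound hm hd.stronglyMeasurable iAB 1 hdbd
  have lhs_eq : ∫ ω, d ω * (A.indicator (fun _ => (1:ℝ)) ω * B.indicator (fun _ => (1:ℝ)) ω) ∂μ
      = ∫ ω, d ω * (e ω * q ω) ∂μ := by
    have h0 : ∫ ω, d ω * (A.indicator (fun _ => (1:ℝ)) ω * B.indicator (fun _ => (1:ℝ)) ω) ∂μ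
        = ∫ ω, (d * (A ∩ B).indicator (fun _ => (1:ℝ))) ω ∂μ := by
      congr 1; funext ω; simp only [Pi.mul_apply, hindAB ω]
    rw [h0, ← integral_condExp hm]
    refine integral_congr_ae ?_
    filter_upwards [l2, hprod] with ω e2 e3
    simp only [Pi.mul_apply] at *
    rw [e2, e3]
    all_goals ring
  -- right side
  have hqb : ∀ᵐ ω ∂μ, |q ω| ≤ 1 :=
    condexp_abs_le hm iB (ae_of_all _ fun ω => abs_indicator_one_le ω)
  have hdqb : ∀ᵐ ω ∂μ, ‖(d * q) ω‖ ≤ 1 := by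
    filter_upwards [hqb] with ω h1
    simp only [Pi.mul_apply, Real.norm_eq_abs, abs_mul]
    calc |d ω| * |q ω| ≤ 1 * 1 := mul_le_mul (hd1 ω) h1 (abs_nonneg _) zero_le_one
    _ = 1 := by norm_num
  have idq : Integrable ((d * q) * A.indicator (fun _ => (1:ℝ))) μ := by
    refine (iA.bdd_mul (c := 1) ?_ hdqb)
    exact ((hdm.aemeasurable.aestronglyMeasurable).mul
      (stronglyMeasurable_condExp.mono hm).aestronglyMeasurable)
  have r2 : μ[(d * q) * A.indicator (fun _ => (1:ℝ)) | m]
      =ᵐ[μ] (d * q) * μ[A.indicator (fun _ => (1:ℝ)) | m] :=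
    condExp_stronglyMeasurable_mul_of_bound hm
      (hd.stronglyMeasurable.mul stronglyMeasurable_condExp) iA 1 hdqb
  have rhs_eq : ∫ ω, d ω * (A.indicator (fun _ => (1:ℝ)) ω * q ω) ∂μ
      = ∫ ω, d ω * (e ω * q ω) ∂μ := by
    have h0 : ∫ ω, d ω * (A.indicator (fun _ => (1:ℝ)) ω * q ω) ∂μ
        = ∫ ω, ((d * q) * A.indicator (fun _ => (1:ℝ))) ω ∂μ := by
      congr 1; funext ω; simp only [Pi.mul_apply]; ring
    rw [h0, ← integral_condExp hm]
    refine integral_congr_ae ?_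
    filter_upwards [r2] with ω e2
    simp only [Pi.mul_apply] at *
    rw [e2]
    all_goals ring
  rw [lhs_eq, ← rhs_eq]

lemma sum_indicator_floor (N : ℕ) (hN : 0 < N) (x : ℝ) (hx0 : 0 ≤ x) (hx1 : x ≤ 1) :
    ∑ j ∈ Finset.range N, (if ((j:ℝ)+1)/(N:ℝ) ≤ x then (1:ℝ) else 0)
      = (⌊(N:ℝ)*x⌋₊ : ℝ) := by
  have hNR : (0:ℝ) < N := by exact_mod_cast hN
  have hcond : ∀ j : ℕ, (((j:ℝ)+1)/(N:ℝ) ≤ x) ↔ j < ⌊(N:ℝ)*x⌋₊ := by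
    intro j
    rw [div_le_iff₀ hNR]
    constructor
    · intro h
      have h' : ((j+1:ℕ):ℝ) ≤ (N:ℝ)*x := by push_cast; nlinarith
      have := Nat.le_floor h'
      omega
    · intro h
      have h2 : (j+1:ℕ) ≤ ⌊(N:ℝ)*x⌋₊ := by omega
      have h' : ((j+1:ℕ):ℝ) ≤ (N:ℝ)*x :=
        (Nat.le_floor_iff (by positivity)).1 h2
      push_cast at h'
      nlinarith
  have hMN : ⌊(N:ℝ)*x⌋₊ ≤ N := by
    have : (N:ℝ)*x ≤ (N:ℝ) := by nlinarith
    calc ⌊(N:ℝ)*x⌋₊ ≤ ⌊(N:ℝ)⌋₊ := Nat.floor_le_floor this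
    _ = N := by simp
  have hsum : ∑ j ∈ Finset.range N, (if ((j:ℝ)+1)/(N:ℝ) ≤ x then (1:ℝ) else 0)
      = ∑ j ∈ Finset.range N, (if j < ⌊(N:ℝ)*x⌋₊ then (1:ℝ) else 0) :=
    Finset.sum_congr rfl fun j _ => if_congr (hcond j) rfl rfl
  rw [hsum, Finset.sum_boole]
  congr 1
  have : (Finset.range N).filter (fun j => j < ⌊(N:ℝ)*x⌋₊) = Finset.range ⌊(N:ℝ)*x⌋₊ := by
    ext j
    simp only [Finset.mem_filter, Finset.mem_range]
    omega
  rw [this, Finset.card_range]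

lemma abs_mul3_le {a b c C : ℝ} (ha : |a| ≤ 1) (hb : |b| ≤ 1) (hc : |c| ≤ C) :
    |a * (b * c)| ≤ C := by
  rw [abs_mul, abs_mul]
  have h1 : |b| * |c| ≤ C := by
    calc |b| * |c| ≤ 1 * |c| := mul_le_mul_of_nonneg_right hb (abs_nonneg c)
    _ = |c| := one_mul _
    _ ≤ C := hc
  calc |a| * (|b| * |c|) ≤ 1 * (|b| * |c|) :=
        mul_le_mul_of_nonneg_right ha (mul_nonneg (abs_nonneg b) (abs_nonneg c))
  _ = |b| * |c| := one_mul _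
  _ ≤ C := h1

lemma integral_indicator_mul_condexp (hm : m ≤ mΩ)
    {A : Set Ω} (hA : MeasurableSet A)
    {r : Ω → ℝ} (hr : Measurable r) (hr01 : ∀ ω, r ω ∈ Set.Icc (0:ℝ) 1)
    {d : Ω → ℝ} (hd : Measurable[m] d) (hd1 : ∀ ω, |d ω| ≤ 1)
    (hCI : ∀ t : Set ℝ, MeasurableSet t →
      (μ⟦A ∩ r ⁻¹' t | m⟧) =ᵐ[μ] (μ⟦A | m⟧) * (μ⟦r ⁻¹' t | m⟧)) :
    ∫ ω, d ω * (A.indicator (fun _ => (1:ℝ)) ω * r ω) ∂μ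
      = ∫ ω, d ω * (A.indicator (fun _ => (1:ℝ)) ω * (μ[r|m]) ω) ∂μ := by
  have hdm : Measurable d := hd.mono hm le_rfl
  have hr1 : ∀ ω, |r ω| ≤ 1 := fun ω =>
    abs_le.2 ⟨by linarith [(hr01 ω).1], (hr01 ω).2⟩
  have ir : Integrable r μ := integrable_of_bdd hr.aestronglyMeasurable hr1
  set L := ∫ ω, d ω * (A.indicator (fun _ => (1:ℝ)) ω * r ω) ∂μ with hL
  set R := ∫ ω, d ω * (A.indicator (fun _ => (1:ℝ)) ω * (μ[r|m]) ω) ∂μ with hR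
  have key : ∀ n : ℕ, |L - R| ≤ 2 / 2 ^ n := by
    intro n
    set N := 2 ^ n with hNdef
    have hN : 0 < N := Nat.pow_pos (by norm_num)
    have hNR : (0:ℝ) < (N:ℝ) := by exact_mod_cast hN
    set B : ℕ → Set Ω := fun j => r ⁻¹' Set.Ici (((j:ℝ)+1)/(N:ℝ)) with hBdef
    have hBm : ∀ j, MeasurableSet (B j) := fun j => hr measurableSet_Ici
    set rn : Ω → ℝ :=
      fun ω => (N:ℝ)⁻¹ * ∑ j ∈ Finset.range N, (B j).indicator (fun _ => (1:ℝ)) ω with hrndef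
    have hrn_meas : Measurable rn :=
      (Finset.measurable_sum (Finset.range N)
        (fun j _ => measurable_const.indicator (hBm j))).const_mul _
    have hfloor : ∀ ω, rn ω = (⌊(N:ℝ) * r ω⌋₊ : ℝ) / (N:ℝ) := by
      intro ω
      have h1 : ∑ j ∈ Finset.range N, (B j).indicator (fun _ => (1:ℝ)) ω
          = ∑ j ∈ Finset.range N, (if ((j:ℝ)+1)/(N:ℝ) ≤ r ω then (1:ℝ) else 0) := by
        refine Finset.sum_congr rfl fun j _ => ?_
        by_cases h : ((j:ℝ)+1)/(N:ℝ) ≤ r ω <;>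
          simp [hBdef, Set.indicator_apply, Set.mem_Ici, h]
      show (N:ℝ)⁻¹ * _ = _
      rw [h1, sum_indicator_floor N hN (r ω) (hr01 ω).1 (hr01 ω).2]
      ring
    have hrn_le : ∀ ω, rn ω ≤ r ω := by
      intro ω
      rw [hfloor, div_le_iff₀ hNR]
      have h1 : (⌊(N:ℝ) * r ω⌋₊ : ℝ) ≤ (N:ℝ) * r ω :=
        Nat.floor_le (mul_nonneg hNR.le (hr01 ω).1)
      nlinarith
    have hle_rn : ∀ ω, r ω - 1/(N:ℝ) ≤ rn ω := by
      intro ω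
      rw [hfloor, le_div_iff₀ hNR]
      have h2 : (N:ℝ) * r ω < (⌊(N:ℝ) * r ω⌋₊ : ℝ) + 1 := Nat.lt_floor_add_one _
      have hinv : (1/(N:ℝ)) * (N:ℝ) = 1 := by field_simp
      nlinarith
    have hrnb : ∀ ω, |r ω - rn ω| ≤ 1/(N:ℝ) := fun ω =>
      abs_le.2 ⟨by linarith [hrn_le ω, hle_rn ω], by linarith [hrn_le ω, hle_rn ω]⟩
    have hrn1 : ∀ ω, |rn ω| ≤ 1 := by
      intro ω
      have h0 : (0:ℝ) ≤ rn ω := by rw [hfloor]; positivity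
      exact abs_le.2 ⟨by linarith, by linarith [hrn_le ω, (hr01 ω).2]⟩
    have irn : Integrable rn μ := integrable_of_bdd hrn_meas.aestronglyMeasurable hrn1
    -- the exchange step on the dyadic approximation
    set Rn : Ω → ℝ :=
      fun ω => (N:ℝ)⁻¹ * ∑ j ∈ Finset.range N, (μ⟦B j | m⟧) ω with hRndef
    have int_term : ∀ j : ℕ, Integrable
        (fun ω => d ω * (A.indicator (fun _ => (1:ℝ)) ω
          * (B j).indicator (fun _ => (1:ℝ)) ω)) μ := by
      intro j
      refine integrable_of_bdd (C := 1)
        ((hdm.mul ((measurable_const.indicator hA).mul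
          (measurable_const.indicator (hBm j)))).aestronglyMeasurable) fun ω => ?_
      exact abs_mul3_le (hd1 ω) (abs_indicator_one_le ω) (abs_indicator_one_le ω)
    have hdAb : ∀ ω, |d ω * A.indicator (fun _ => (1:ℝ)) ω| ≤ 1 := fun ω => by
      rw [abs_mul]
      calc |d ω| * |A.indicator (fun _ => (1:ℝ)) ω| ≤ 1 * 1 :=
            mul_le_mul (hd1 ω) (abs_indicator_one_le ω) (abs_nonneg _) zero_le_one
      _ = 1 := by norm_num
    have hdA_asm : AEStronglyMeasurable (fun ω => d ω * A.indicator (fun _ => (1:ℝ)) ω) μ :=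
      (hdm.mul (measurable_const.indicator hA)).aestronglyMeasurable
    have hdA_norm : ∀ᵐ ω ∂μ, ‖d ω * A.indicator (fun _ => (1:ℝ)) ω‖ ≤ 1 :=
      ae_of_all _ fun ω => by rw [Real.norm_eq_abs]; exact hdAb ω
    have int_termq : ∀ j : ℕ, Integrable
        (fun ω => d ω * (A.indicator (fun _ => (1:ℝ)) ω * (μ⟦B j | m⟧) ω)) μ := by
      intro j
      exact (Integrable.bdd_mul (c := 1) integrable_condExp hdA_asm hdA_norm).congr
        (ae_of_all _ fun ω => mul_assoc _ _ _)
    -- exchange on the dyadic approximation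
    set Rn : Ω → ℝ :=
      fun ω => (N:ℝ)⁻¹ * ∑ j ∈ Finset.range N, (μ⟦B j | m⟧) ω with hRndef
    have hstep : ∫ ω, d ω * (A.indicator (fun _ => (1:ℝ)) ω * rn ω) ∂μ
        = ∫ ω, d ω * (A.indicator (fun _ => (1:ℝ)) ω * Rn ω) ∂μ := by
      have e1 : ∫ ω, d ω * (A.indicator (fun _ => (1:ℝ)) ω * rn ω) ∂μ
          = (N:ℝ)⁻¹ * ∑ j ∈ Finset.range N, ∫ ω, d ω * (A.indicator (fun _ => (1:ℝ)) ω
              * (B j).indicator (fun _ => (1:ℝ)) ω) ∂μ := by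
        have h0 : (fun ω => d ω * (A.indicator (fun _ => (1:ℝ)) ω * rn ω))
            = fun ω => (N:ℝ)⁻¹ * ∑ j ∈ Finset.range N,
                d ω * (A.indicator (fun _ => (1:ℝ)) ω * (B j).indicator (fun _ => (1:ℝ)) ω) := by
          funext ω
          rw [← Finset.mul_sum, ← Finset.mul_sum]
          show d ω * (A.indicator (fun _ => (1:ℝ)) ω * ((N:ℝ)⁻¹ * _)) = _
          ring
        rw [h0, integral_const_mul, integral_finset_sum _ (fun j _ => int_term j)]
      have e2 : ∫ ω, d ω * (A.indicator (fun _ => (1:ℝ)) ω * Rn ω) ∂μ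
          = (N:ℝ)⁻¹ * ∑ j ∈ Finset.range N, ∫ ω, d ω * (A.indicator (fun _ => (1:ℝ)) ω
              * (μ⟦B j | m⟧) ω) ∂μ := by
        have h0 : (fun ω => d ω * (A.indicator (fun _ => (1:ℝ)) ω * Rn ω))
            = fun ω => (N:ℝ)⁻¹ * ∑ j ∈ Finset.range N,
                d ω * (A.indicator (fun _ => (1:ℝ)) ω * (μ⟦B j | m⟧) ω) := by
          funext ω
          rw [← Finset.mul_sum, ← Finset.mul_sum]
          show d ω * (A.indicator (fun _ => (1:ℝ)) ω * ((N:ℝ)⁻¹ * _)) = _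
          ring
        rw [h0, integral_const_mul, integral_finset_sum _ (fun j _ => int_termq j)]
      rw [e1, e2]
      refine congrArg (fun z => (N:ℝ)⁻¹ * z) (Finset.sum_congr rfl fun j _ => ?_)
      exact atomic hm hA (hBm j) hd hd1 (hCI _ measurableSet_Ici)
    -- Rn is a.e. close to the conditional expectation of r
    have hfun : (fun ω => ∑ j ∈ Finset.range N, (B j).indicator (fun _ => (1:ℝ)) ω)
        = ∑ j ∈ Finset.range N, (B j).indicator (fun _ => (1:ℝ)) := by
      funext ω; rw [Finset.sum_apply]
    have hRn_eq : Rn =ᵐ[μ] μ[rn|m] := by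
      have h2 := condExp_finsetSum (μ := μ) (m := m)
        (s := Finset.range N) (f := fun j => (B j).indicator (fun _ => (1:ℝ)))
        (fun j _ => (integrable_const (1:ℝ)).indicator (hBm j))
      have h1 : μ[(fun ω => ∑ j ∈ Finset.range N, (B j).indicator (fun _ => (1:ℝ)) ω)|m]
          =ᵐ[μ] fun ω => ∑ j ∈ Finset.range N, (μ⟦B j | m⟧) ω := by
        rw [hfun]
        refine h2.trans (Filter.EventuallyEq.of_eq ?_)
        funext ω; rw [Finset.sum_apply]
      have h4 : rn = (N:ℝ)⁻¹ •
          (fun ω => ∑ j ∈ Finset.range N, (B j).indicator (fun _ => (1:ℝ)) ω) := by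
        funext ω; simp [hrndef, smul_eq_mul]
      have h3 : μ[rn|m] =ᵐ[μ] fun ω => (N:ℝ)⁻¹
          * (μ[(fun ω => ∑ j ∈ Finset.range N, (B j).indicator (fun _ => (1:ℝ)) ω)|m]) ω := by
        rw [h4]
        refine (condExp_smul ((N:ℝ)⁻¹) _ m).trans (ae_of_all _ fun ω => ?_)
        simp [smul_eq_mul]
      filter_upwards [h1, h3] with ω e1' e3'
      show (N:ℝ)⁻¹ * ∑ j ∈ Finset.range N, (μ⟦B j | m⟧) ω = (μ[rn|m]) ω
      rw [e3', e1']
    have hclose : ∀ᵐ ω ∂μ, |Rn ω - (μ[r|m]) ω| ≤ 1/(N:ℝ) := by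
      have hsub : μ[rn - r|m] =ᵐ[μ] μ[rn|m] - μ[r|m] := condExp_sub irn ir m
      have habs : ∀ᵐ ω ∂μ, |(μ[rn - r|m]) ω| ≤ 1/(N:ℝ) :=
        condexp_abs_le hm (irn.sub ir) (ae_of_all _ fun ω => by
          simpa [Pi.sub_apply, abs_sub_comm] using hrnb ω)
      filter_upwards [hRn_eq, hsub, habs] with ω e1' e2' e3'
      rw [e1']
      have h5 : (μ[rn|m]) ω - (μ[r|m]) ω = (μ[rn - r|m]) ω := by
        rw [e2']; simp [Pi.sub_apply]
      rw [h5]; exact e3'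
    -- integrability of the four integrands
    have i1 : Integrable (fun ω => d ω * (A.indicator (fun _ => (1:ℝ)) ω * r ω)) μ :=
      integrable_of_bdd ((hdm.mul ((measurable_const.indicator hA).mul hr)).aestronglyMeasurable)
        (fun ω => abs_mul3_le (hd1 ω) (abs_indicator_one_le ω) (hr1 ω))
    have i2 : Integrable (fun ω => d ω * (A.indicator (fun _ => (1:ℝ)) ω * rn ω)) μ :=
      integrable_of_bdd
        ((hdm.mul ((measurable_const.indicator hA).mul hrn_meas)).aestronglyMeasurable)
        (fun ω => abs_mul3_le (hd1 ω) (abs_indicator_one_le ω) (hrn1 ω))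
    have iRn : Integrable Rn μ :=
      (integrable_finset_sum _ (fun j (_ : j ∈ Finset.range N) =>
        (integrable_condExp : Integrable (μ⟦B j | m⟧) μ))).const_mul _
    have i3 : Integrable (fun ω => d ω * (A.indicator (fun _ => (1:ℝ)) ω * Rn ω)) μ :=
      (Integrable.bdd_mul (c := 1) iRn hdA_asm hdA_norm).congr
        (ae_of_all _ fun ω => mul_assoc _ _ _)
    have i4 : Integrable (fun ω => d ω * (A.indicator (fun _ => (1:ℝ)) ω * (μ[r|m]) ω)) μ :=
      (Integrable.bdd_mul (c := 1) integrable_condExp hdA_asm hdA_norm).congr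
        (ae_of_all _ fun ω => mul_assoc _ _ _)
    -- the two error bounds
    have b1 : |L - ∫ ω, d ω * (A.indicator (fun _ => (1:ℝ)) ω * rn ω) ∂μ| ≤ 1/(N:ℝ) := by
      rw [hL, ← integral_sub i1 i2]
      have hb : ∀ᵐ ω ∂μ, ‖d ω * (A.indicator (fun _ => (1:ℝ)) ω * r ω)
          - d ω * (A.indicator (fun _ => (1:ℝ)) ω * rn ω)‖ ≤ 1/(N:ℝ) := by
        refine ae_of_all _ fun ω => ?_
        have h6 : d ω * (A.indicator (fun _ => (1:ℝ)) ω * r ω)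
            - d ω * (A.indicator (fun _ => (1:ℝ)) ω * rn ω)
            = d ω * (A.indicator (fun _ => (1:ℝ)) ω * (r ω - rn ω)) := by ring
        rw [Real.norm_eq_abs, h6]
        exact abs_mul3_le (hd1 ω) (abs_indicator_one_le ω) (hrnb ω)
      calc |∫ ω, (d ω * (A.indicator (fun _ => (1:ℝ)) ω * r ω)
              - d ω * (A.indicator (fun _ => (1:ℝ)) ω * rn ω)) ∂μ|
          ≤ (1/(N:ℝ)) * (μ Set.univ).toReal := norm_integral_le_of_norm_le_const hb
      _ = 1/(N:ℝ) := by simp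
    have b2 : |(∫ ω, d ω * (A.indicator (fun _ => (1:ℝ)) ω * Rn ω) ∂μ) - R| ≤ 1/(N:ℝ) := by
      rw [hR, ← integral_sub i3 i4]
      have hb : ∀ᵐ ω ∂μ, ‖d ω * (A.indicator (fun _ => (1:ℝ)) ω * Rn ω)
          - d ω * (A.indicator (fun _ => (1:ℝ)) ω * (μ[r|m]) ω)‖ ≤ 1/(N:ℝ) := by
        filter_upwards [hclose] with ω hc
        have h6 : d ω * (A.indicator (fun _ => (1:ℝ)) ω * Rn ω)
            - d ω * (A.indicator (fun _ => (1:ℝ)) ω * (μ[r|m]) ω)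
            = d ω * (A.indicator (fun _ => (1:ℝ)) ω * (Rn ω - (μ[r|m]) ω)) := by ring
        rw [Real.norm_eq_abs, h6]
        exact abs_mul3_le (hd1 ω) (abs_indicator_one_le ω) hc
      calc |∫ ω, (d ω * (A.indicator (fun _ => (1:ℝ)) ω * Rn ω)
              - d ω * (A.indicator (fun _ => (1:ℝ)) ω * (μ[r|m]) ω)) ∂μ|
          ≤ (1/(N:ℝ)) * (μ Set.univ).toReal := norm_integral_le_of_norm_le_const hb
      _ = 1/(N:ℝ) := by simp
    have hsplit : L - R = (L - ∫ ω, d ω * (A.indicator (fun _ => (1:ℝ)) ω * rn ω) ∂μ)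
        + ((∫ ω, d ω * (A.indicator (fun _ => (1:ℝ)) ω * Rn ω) ∂μ) - R) := by
      rw [← hstep]; ring
    calc |L - R| ≤ |L - ∫ ω, d ω * (A.indicator (fun _ => (1:ℝ)) ω * rn ω) ∂μ|
          + |(∫ ω, d ω * (A.indicator (fun _ => (1:ℝ)) ω * Rn ω) ∂μ) - R| := by
            rw [hsplit]; exact abs_add_le _ _
    _ ≤ 1/(N:ℝ) + 1/(N:ℝ) := add_le_add b1 b2
    _ = 2/(N:ℝ) := by ring
    _ = 2/2^n := by rw [hNdef]; push_cast; ring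
  have hlim : Filter.Tendsto (fun n : ℕ => (2:ℝ) / 2 ^ n) atTop (nhds 0) := by
    have h2 : Filter.Tendsto (fun n : ℕ => ((2:ℝ)) ^ n) atTop atTop :=
      tendsto_pow_atTop_atTop_of_one_lt (by norm_num)
    simpa using Filter.Tendsto.div_atTop tendsto_const_nhds h2
  have h0 : |L - R| ≤ 0 := ge_of_tendsto' hlim key
  have h1 := abs_le.1 h0
  linarith [h1.1, h1.2]

set_option maxHeartbeats 2000000 in
theorem main_aux {α : Type*} [Fintype α] (hm : m ≤ mΩ)
    (k : ℕ) (hk : 1 ≤ k)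
    (r χ : α → Ω → ℝ) (hr_meas : ∀ a, Measurable (r a))
    (hr01 : ∀ a ω, r a ω ∈ Set.Icc (0 : ℝ) 1)
    (hχ_meas : ∀ a, Measurable (χ a))
    (hχ01 : ∀ a ω, χ a ω = 0 ∨ χ a ω = 1)
    (hsum : ∀ᵐ ω ∂μ, ∑ a : α, χ a ω ≤ (k : ℝ))
    (F Fs : α → Ω → ℝ)
    (hF_meas : ∀ a, Measurable[m] (F a)) (hFs_meas : ∀ a, Measurable[m] (Fs a))
    (hF01 : ∀ a ω, F a ω ∈ Set.Icc (0 : ℝ) 1)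
    (hFs01 : ∀ a ω, Fs a ω ∈ Set.Icc (0 : ℝ) 1)
    (ε : ℝ) (hε : 0 ≤ ε)
    (hmisspec : ∀ a, ∀ᵐ ω ∂μ, |(μ[r a | m]) ω - Fs a ω| ≤ ε)
    (hCI : ∀ a, ∀ t : Set ℝ, MeasurableSet t →
      (μ⟦(χ a ⁻¹' {1}) ∩ r a ⁻¹' t | m⟧)
        =ᵐ[μ] (μ⟦(χ a ⁻¹' {1}) | m⟧) * (μ⟦r a ⁻¹' t | m⟧))
    (Y : Ω → ℝ)
    (hY : Y = fun ω => (1 / (k : ℝ)) *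
      ∑ a : α, ((F a ω - r a ω) ^ 2 - (Fs a ω - r a ω) ^ 2) * χ a ω) :
    ProbabilityTheory.variance Y μ ≤ 8 * (∫ ω, Y ω ∂μ) + 16 * ε ^ 2 := by
  classical
  have hkR : (0:ℝ) < (k:ℝ) := by exact_mod_cast hk
  set d : α → Ω → ℝ := fun a ω => F a ω - Fs a ω with hd
  set A : α → Set Ω := fun a => χ a ⁻¹' {1} with hA
  have hdm : ∀ a, Measurable[m] (d a) := fun a => (hF_meas a).sub (hFs_meas a)
  have hd1 : ∀ a ω, |d a ω| ≤ 1 := by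
    intro a ω
    have h1 := hF01 a ω
    have h2 := hFs01 a ω
    simp only [Set.mem_Icc] at h1 h2
    exact abs_le.2 ⟨by simp only [hd]; linarith, by simp only [hd]; linarith⟩
  have hAm : ∀ a, MeasurableSet (A a) := fun a => (hχ_meas a) (measurableSet_singleton 1)
  have hχ0 : ∀ a ω, 0 ≤ χ a ω := by
    intro a ω; rcases hχ01 a ω with h | h <;> rw [h] <;> norm_num
  have hχ1 : ∀ a ω, χ a ω ≤ 1 := by
    intro a ω; rcases hχ01 a ω with h | h <;> rw [h] <;> norm_num
  have hind : ∀ a ω, (A a).indicator (fun _ => (1:ℝ)) ω = χ a ω := by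
    intro a ω
    rcases hχ01 a ω with h | h <;>
      simp [Set.indicator_apply, hA, Set.mem_preimage, h]
  have hCI' : ∀ a, ∀ t : Set ℝ, MeasurableSet t →
      (μ⟦A a ∩ r a ⁻¹' t | m⟧) =ᵐ[μ] (μ⟦A a | m⟧) * (μ⟦r a ⁻¹' t | m⟧) := hCI
  clear_value d A
  have hχ_int : ∀ a, Integrable (χ a) μ := fun a =>
    integrable_of_bdd (hχ_meas a).aestronglyMeasurable
      (fun ω => abs_le.2 ⟨by linarith [hχ0 a ω], hχ1 a ω⟩)
  have hr1 : ∀ a ω, |r a ω| ≤ 1 := fun a ω =>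
    abs_le.2 ⟨by linarith [(hr01 a ω).1], (hr01 a ω).2⟩
  have hr_int : ∀ a, Integrable (r a) μ := fun a =>
    integrable_of_bdd (hr_meas a).aestronglyMeasurable (hr1 a)
  have hFXm : ∀ a, Measurable (F a) := fun a => (hF_meas a).mono hm le_rfl
  have hFsXm : ∀ a, Measurable (Fs a) := fun a => (hFs_meas a).mono hm le_rfl
  have hdmeas : ∀ a, Measurable (d a) := fun a => (hdm a).mono hm le_rfl
  have ht_meas : ∀ a, Measurable (fun ω =>
      ((F a ω - r a ω) ^ 2 - (Fs a ω - r a ω) ^ 2) * χ a ω) := fun a =>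
    ((((hFXm a).sub (hr_meas a)).pow_const 2).sub
      (((hFsXm a).sub (hr_meas a)).pow_const 2)).mul (hχ_meas a)
  have ht_bdd : ∀ a ω,
      |((F a ω - r a ω) ^ 2 - (Fs a ω - r a ω) ^ 2) * χ a ω| ≤ 2 := by
    intro a ω
    have h1 := hF01 a ω
    have h2 := hFs01 a ω
    have h3 := hr01 a ω
    simp only [Set.mem_Icc] at h1 h2 h3
    rw [abs_mul]
    have hb1 : |(F a ω - r a ω) ^ 2 - (Fs a ω - r a ω) ^ 2| ≤ 2 := by
      rw [abs_le]; constructor <;> nlinarith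
    have hb2 : |χ a ω| ≤ 1 := abs_le.2 ⟨by linarith [hχ0 a ω], hχ1 a ω⟩
    nlinarith [abs_nonneg ((F a ω - r a ω) ^ 2 - (Fs a ω - r a ω) ^ 2),
      abs_nonneg (χ a ω)]
  have ht_int : ∀ a, Integrable (fun ω =>
      ((F a ω - r a ω) ^ 2 - (Fs a ω - r a ω) ^ 2) * χ a ω) μ := fun a =>
    integrable_of_bdd (ht_meas a).aestronglyMeasurable (ht_bdd a)
  have hd2χ_meas : ∀ a, Measurable (fun ω => (d a ω)^2 * χ a ω) := fun a =>
    ((hdmeas a).pow_const 2).mul (hχ_meas a)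
  have hd2χ_bdd : ∀ a ω, |(d a ω)^2 * χ a ω| ≤ 1 := by
    intro a ω
    rw [abs_mul]
    have h1 : |(d a ω)^2| ≤ 1 := by
      rw [abs_le]; constructor <;> nlinarith [hd1 a ω, abs_le.1 (hd1 a ω), sq_abs (d a ω),
        sq_nonneg (d a ω)]
    have h2 : |χ a ω| ≤ 1 := abs_le.2 ⟨by linarith [hχ0 a ω], hχ1 a ω⟩
    nlinarith [abs_nonneg ((d a ω)^2), abs_nonneg (χ a ω)]
  have hd2χ_int : ∀ a, Integrable (fun ω => (d a ω)^2 * χ a ω) μ := fun a =>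
    integrable_of_bdd (hd2χ_meas a).aestronglyMeasurable (hd2χ_bdd a)
  -- per-arm inequality
  have perarm : ∀ a : α,
      ∫ ω, (d a ω)^2 * χ a ω ∂μ ≤
        2 * ∫ ω, ((F a ω - r a ω) ^ 2 - (Fs a ω - r a ω) ^ 2) * χ a ω ∂μ
          + 4 * ε^2 * ∫ ω, χ a ω ∂μ := by
    intro a
    set G := μ[r a|m] with hG
    have hχb : ∀ ω, |χ a ω| ≤ 1 := fun ω => abs_le.2 ⟨by linarith [hχ0 a ω], hχ1 a ω⟩
    have hsubst : ∫ ω, d a ω * (χ a ω * r a ω) ∂μ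
        = ∫ ω, d a ω * (χ a ω * G ω) ∂μ := by
      have h := integral_indicator_mul_condexp (μ := μ) hm (hAm a) (hr_meas a)
        (fun ω => hr01 a ω) (hdm a) (hd1 a) (hCI' a)
      have e1 : ∫ ω, d a ω * (χ a ω * r a ω) ∂μ
          = ∫ ω, d a ω * ((A a).indicator (fun _ => (1:ℝ)) ω * r a ω) ∂μ := by
        refine integral_congr_ae (ae_of_all _ fun ω => ?_); simp only [hind]
      have e2 : ∫ ω, d a ω * (χ a ω * G ω) ∂μ
          = ∫ ω, d a ω * ((A a).indicator (fun _ => (1:ℝ)) ω * G ω) ∂μ := by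
        refine integral_congr_ae (ae_of_all _ fun ω => ?_); simp only [hind]
      rw [e1, e2]; exact h
    have idsχ : Integrable (fun ω => d a ω * (χ a ω * (F a ω + Fs a ω))) μ := by
      refine integrable_of_bdd (C := 2)
        (((hdmeas a).mul ((hχ_meas a).mul ((hFXm a).add (hFsXm a)))).aestronglyMeasurable)
        fun ω => ?_
      have h1 := hF01 a ω; have h2 := hFs01 a ω
      simp only [Set.mem_Icc] at h1 h2
      exact abs_mul3_le (hd1 a ω) (hχb ω) (abs_le.2 ⟨by linarith, by linarith⟩)
    have idrχ : Integrable (fun ω => d a ω * (χ a ω * r a ω)) μ :=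
      integrable_of_bdd (C := 1)
        (((hdmeas a).mul ((hχ_meas a).mul (hr_meas a))).aestronglyMeasurable)
        fun ω => abs_mul3_le (hd1 a ω) (hχb ω) (hr1 a ω)
    have hdχ_norm : ∀ᵐ ω ∂μ, ‖d a ω * χ a ω‖ ≤ 1 := ae_of_all _ fun ω => by
      rw [Real.norm_eq_abs, abs_mul]
      calc |d a ω| * |χ a ω| ≤ 1 * 1 :=
            mul_le_mul (hd1 a ω) (hχb ω) (abs_nonneg _) zero_le_one
      _ = 1 := by norm_num
    have idGχ : Integrable (fun ω => d a ω * (χ a ω * G ω)) μ :=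
      (Integrable.bdd_mul (c := 1) integrable_condExp
        (((hdmeas a).mul (hχ_meas a)).aestronglyMeasurable) hdχ_norm).congr
        (ae_of_all _ fun ω => mul_assoc _ _ _)
    have hexpand : ∫ ω, ((F a ω - r a ω) ^ 2 - (Fs a ω - r a ω) ^ 2) * χ a ω ∂μ
        = (∫ ω, d a ω * (χ a ω * (F a ω + Fs a ω)) ∂μ)
          - 2 * ∫ ω, d a ω * (χ a ω * r a ω) ∂μ := by
      have h0 : (fun ω => ((F a ω - r a ω) ^ 2 - (Fs a ω - r a ω) ^ 2) * χ a ω)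
          = fun ω => d a ω * (χ a ω * (F a ω + Fs a ω))
            - 2 * (d a ω * (χ a ω * r a ω)) := by
        funext ω; simp only [hd]; ring
      rw [h0, integral_sub idsχ (idrχ.const_mul 2), integral_const_mul]
    have hcomb : ∫ ω, ((F a ω - r a ω) ^ 2 - (Fs a ω - r a ω) ^ 2) * χ a ω ∂μ
        = ∫ ω, (d a ω * (χ a ω * (F a ω + Fs a ω))
            - 2 * (d a ω * (χ a ω * G ω))) ∂μ := by
      rw [hexpand, hsubst, integral_sub idsχ (idGχ.const_mul 2), integral_const_mul]
    have hptwise : ∀ᵐ ω ∂μ, ((d a ω)^2/2 - 2*ε^2) * χ a ω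
        ≤ d a ω * (χ a ω * (F a ω + Fs a ω)) - 2 * (d a ω * (χ a ω * G ω)) := by
      filter_upwards [hmisspec a] with ω hmiss
      have hDfs : F a ω = d a ω + Fs a ω := by simp only [hd]; ring
      have h1 : |Fs a ω - G ω| ≤ ε := by rw [abs_sub_comm]; exact hmiss
      have hle : |d a ω * (Fs a ω - G ω)| ≤ |d a ω| * ε := by
        rw [abs_mul]; exact mul_le_mul_of_nonneg_left h1 (abs_nonneg _)
      have h2 : -(|d a ω| * ε) ≤ d a ω * (Fs a ω - G ω) := by
        linarith [(abs_le.1 hle).1]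
      have h3 : |d a ω| * ε ≤ (d a ω)^2/4 + ε^2 := by
        nlinarith [sq_nonneg (|d a ω| - 2*ε), sq_abs (d a ω)]
      have h4 : (d a ω)^2/2 - 2*ε^2 ≤ (d a ω)^2 + 2*(d a ω*(Fs a ω - G ω)) := by
        linarith
      have h5 : d a ω * (χ a ω * (F a ω + Fs a ω)) - 2 * (d a ω * (χ a ω * G ω))
          = ((d a ω)^2 + 2*(d a ω*(Fs a ω - G ω))) * χ a ω := by
        rw [hDfs]; ring
      calc ((d a ω)^2/2 - 2*ε^2) * χ a ω
          ≤ ((d a ω)^2 + 2*(d a ω*(Fs a ω - G ω))) * χ a ω :=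
            mul_le_mul_of_nonneg_right h4 (hχ0 a ω)
      _ = _ := h5.symm
    have hlhs_eq : (fun ω => ((d a ω)^2/2 - 2*ε^2) * χ a ω)
        = fun ω => (1/2) * ((d a ω)^2 * χ a ω) - (2*ε^2) * χ a ω := by
      funext ω; ring
    have hlhs_int : Integrable (fun ω => ((d a ω)^2/2 - 2*ε^2) * χ a ω) μ := by
      rw [hlhs_eq]
      exact ((hd2χ_int a).const_mul _).sub ((hχ_int a).const_mul _)
    have hrhs_int : Integrable (fun ω => d a ω * (χ a ω * (F a ω + Fs a ω))
        - 2 * (d a ω * (χ a ω * G ω))) μ := idsχ.sub (idGχ.const_mul 2)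
    have hmono := integral_mono_ae hlhs_int hrhs_int hptwise
    have hsplit : ∫ ω, ((d a ω)^2/2 - 2*ε^2) * χ a ω ∂μ
        = (1/2) * ∫ ω, (d a ω)^2 * χ a ω ∂μ - (2*ε^2) * ∫ ω, χ a ω ∂μ := by
      rw [hlhs_eq, integral_sub ((hd2χ_int a).const_mul _) ((hχ_int a).const_mul _),
        integral_const_mul, integral_const_mul]
    rw [hsplit, ← hcomb] at hmono
    linarith [hmono]
  -- global assembly
  have hEY : ∫ ω, Y ω ∂μ = (1/(k:ℝ)) * ∑ a : α, ∫ ω,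
      ((F a ω - r a ω) ^ 2 - (Fs a ω - r a ω) ^ 2) * χ a ω ∂μ := by
    rw [hY, integral_const_mul, integral_finset_sum _ (fun a _ => ht_int a)]
  have hsumC : ∑ a : α, ∫ ω, χ a ω ∂μ ≤ (k:ℝ) := by
    have h1 : ∑ a : α, ∫ ω, χ a ω ∂μ = ∫ ω, ∑ a : α, χ a ω ∂μ :=
      (integral_finset_sum _ (fun a _ => hχ_int a)).symm
    rw [h1]
    calc ∫ ω, ∑ a : α, χ a ω ∂μ ≤ ∫ ω, (k:ℝ) ∂μ :=
        integral_mono_ae (integrable_finset_sum _ fun a _ => hχ_int a)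
          (integrable_const _) hsum
    _ = (k:ℝ) := by simp
  have hY_meas : Measurable Y := by
    rw [hY]
    exact (Finset.measurable_sum Finset.univ (fun a _ => ht_meas a)).const_mul _
  have hvar : variance Y μ ≤ ∫ ω, (Y ω)^2 ∂μ := by
    have h := variance_le_expectation_sq (μ := μ) hY_meas.aestronglyMeasurable
    simpa using h
  have hCS : ∀ᵐ ω ∂μ, (Y ω)^2 ≤ (4/(k:ℝ)) * ∑ a : α, (d a ω)^2 * χ a ω := by
    filter_upwards [hsum] with ω hs
    have hχsq : ∀ b : α, χ b ω ^ 2 = χ b ω := fun b => by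
      rcases hχ01 b ω with h | h <;> rw [h] <;> ring
    have hCS0 : (∑ a : α, ((F a ω - r a ω) ^ 2 - (Fs a ω - r a ω) ^ 2) * χ a ω) ^ 2
        ≤ (∑ a : α, χ a ω) * ∑ a : α,
          ((F a ω - r a ω) ^ 2 - (Fs a ω - r a ω) ^ 2) ^ 2 * χ a ω := by
      have h := Finset.sum_mul_sq_le_sq_mul_sq Finset.univ (fun a => χ a ω)
        (fun a => ((F a ω - r a ω) ^ 2 - (Fs a ω - r a ω) ^ 2) * χ a ω)
      have e1 : ∑ a : α, χ a ω * (((F a ω - r a ω) ^ 2 - (Fs a ω - r a ω) ^ 2) * χ a ω)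
          = ∑ a : α, ((F a ω - r a ω) ^ 2 - (Fs a ω - r a ω) ^ 2) * χ a ω := by
        refine Finset.sum_congr rfl fun b _ => ?_
        have := hχsq b
        nlinarith [hχsq b]
      have e2 : ∑ a : α, (χ a ω) ^ 2 = ∑ a : α, χ a ω :=
        Finset.sum_congr rfl fun b _ => hχsq b
      have e3 : ∑ a : α, (((F a ω - r a ω) ^ 2 - (Fs a ω - r a ω) ^ 2) * χ a ω) ^ 2
          = ∑ a : α, ((F a ω - r a ω) ^ 2 - (Fs a ω - r a ω) ^ 2) ^ 2 * χ a ω := by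
        refine Finset.sum_congr rfl fun b _ => ?_
        rw [mul_pow, hχsq b]
      rw [e1, e2, e3] at h
      exact h
    have ht2 : ∀ b : α, ((F b ω - r b ω) ^ 2 - (Fs b ω - r b ω) ^ 2) ^ 2 * χ b ω
        ≤ 4 * ((d b ω)^2 * χ b ω) := by
      intro b
      have hsb : (F b ω - r b ω) ^ 2 - (Fs b ω - r b ω) ^ 2
          = d b ω * (F b ω + Fs b ω - 2 * r b ω) := by simp only [hd]; ring
      have h1 := hF01 b ω; have h2 := hFs01 b ω; have h3 := hr01 b ω
      simp only [Set.mem_Icc] at h1 h2 h3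
      have hs2 : (F b ω + Fs b ω - 2 * r b ω)^2 ≤ 4 := by nlinarith
      rw [hsb, mul_pow]
      have : (d b ω)^2 * (F b ω + Fs b ω - 2 * r b ω)^2 ≤ (d b ω)^2 * 4 :=
        mul_le_mul_of_nonneg_left hs2 (sq_nonneg _)
      nlinarith [mul_le_mul_of_nonneg_right this (hχ0 b ω)]
    have hsum2 : ∑ a : α, ((F a ω - r a ω) ^ 2 - (Fs a ω - r a ω) ^ 2) ^ 2 * χ a ω
        ≤ 4 * ∑ a : α, (d a ω)^2 * χ a ω := by
      rw [Finset.mul_sum]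
      exact Finset.sum_le_sum fun b _ => ht2 b
    have hnn : (0:ℝ) ≤ ∑ a : α, ((F a ω - r a ω) ^ 2 - (Fs a ω - r a ω) ^ 2) ^ 2 * χ a ω :=
      Finset.sum_nonneg fun b _ => mul_nonneg (sq_nonneg _) (hχ0 b ω)
    have hnn2 : (0:ℝ) ≤ ∑ a : α, (d a ω)^2 * χ a ω :=
      Finset.sum_nonneg fun b _ => mul_nonneg (sq_nonneg _) (hχ0 b ω)
    have hY2 : (Y ω)^2 = (1/(k:ℝ))^2 *
        (∑ a : α, ((F a ω - r a ω) ^ 2 - (Fs a ω - r a ω) ^ 2) * χ a ω) ^ 2 := by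
      rw [hY]; ring
    rw [hY2]
    have hchain : (∑ a : α, ((F a ω - r a ω) ^ 2 - (Fs a ω - r a ω) ^ 2) * χ a ω) ^ 2
        ≤ (k:ℝ) * (4 * ∑ a : α, (d a ω)^2 * χ a ω) := by
      calc (∑ a : α, ((F a ω - r a ω) ^ 2 - (Fs a ω - r a ω) ^ 2) * χ a ω) ^ 2
          ≤ (∑ a : α, χ a ω) * ∑ a : α,
            ((F a ω - r a ω) ^ 2 - (Fs a ω - r a ω) ^ 2) ^ 2 * χ a ω := hCS0
      _ ≤ (k:ℝ) * ∑ a : α,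
            ((F a ω - r a ω) ^ 2 - (Fs a ω - r a ω) ^ 2) ^ 2 * χ a ω :=
          mul_le_mul_of_nonneg_right hs hnn
      _ ≤ (k:ℝ) * (4 * ∑ a : α, (d a ω)^2 * χ a ω) :=
          mul_le_mul_of_nonneg_left hsum2 hkR.le
    calc (1/(k:ℝ))^2 *
        (∑ a : α, ((F a ω - r a ω) ^ 2 - (Fs a ω - r a ω) ^ 2) * χ a ω) ^ 2
        ≤ (1/(k:ℝ))^2 * ((k:ℝ) * (4 * ∑ a : α, (d a ω)^2 * χ a ω)) :=
          mul_le_mul_of_nonneg_left hchain (by positivity)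
    _ = (4/(k:ℝ)) * ∑ a : α, (d a ω)^2 * χ a ω := by
        field_simp
  have hY2_int : Integrable (fun ω => (Y ω)^2) μ := by
    refine integrable_of_bdd (C := ((Fintype.card α : ℝ) * 2)^2)
      ((hY_meas.pow_const 2).aestronglyMeasurable) fun ω => ?_
    have hYb : |Y ω| ≤ (Fintype.card α : ℝ) * 2 := by
      rw [hY]
      have h1 : |∑ a : α, ((F a ω - r a ω) ^ 2 - (Fs a ω - r a ω) ^ 2) * χ a ω|
          ≤ ∑ a : α, (2:ℝ) :=
        (Finset.abs_sum_le_sum_abs _ _).trans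
          (Finset.sum_le_sum fun b _ => ht_bdd b ω)
      have h2 : (∑ _a : α, (2:ℝ)) = (Fintype.card α : ℝ) * 2 := by
        rw [Finset.sum_const]; simp [Finset.card_univ, mul_comm]
      have h3 : |1/(k:ℝ)| ≤ 1 := by
        rw [abs_of_nonneg (by positivity)]
        rw [div_le_one hkR]
        exact_mod_cast hk
      rw [abs_mul]
      calc |1/(k:ℝ)| * |∑ a : α, ((F a ω - r a ω) ^ 2 - (Fs a ω - r a ω) ^ 2) * χ a ω|
          ≤ 1 * ((Fintype.card α : ℝ) * 2) := by
            refine mul_le_mul h3 (h1.trans_eq h2) (abs_nonneg _) zero_le_one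
      _ = (Fintype.card α : ℝ) * 2 := one_mul _
    rw [abs_le]
    constructor
    · nlinarith [sq_nonneg (Y ω), sq_nonneg ((Fintype.card α : ℝ) * 2)]
    · nlinarith [abs_le.1 hYb, sq_abs (Y ω), abs_nonneg (Y ω)]
  have hd2χsum_int : Integrable (fun ω => (4/(k:ℝ)) * ∑ a : α, (d a ω)^2 * χ a ω) μ :=
    (integrable_finset_sum _ (fun a (_ : a ∈ Finset.univ) => hd2χ_int a)).const_mul _
  have hEY2 : ∫ ω, (Y ω)^2 ∂μ ≤ (4/(k:ℝ)) * ∑ a : α, ∫ ω, (d a ω)^2 * χ a ω ∂μ := by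
    calc ∫ ω, (Y ω)^2 ∂μ ≤ ∫ ω, (4/(k:ℝ)) * ∑ a : α, (d a ω)^2 * χ a ω ∂μ :=
        integral_mono_ae hY2_int hd2χsum_int hCS
    _ = (4/(k:ℝ)) * ∑ a : α, ∫ ω, (d a ω)^2 * χ a ω ∂μ := by
        rw [integral_const_mul, integral_finset_sum _ (fun a _ => hd2χ_int a)]
  -- finish
  have hsumI : ∑ a : α, ∫ ω, (d a ω)^2 * χ a ω ∂μ
      ≤ ∑ a : α, (2 * ∫ ω, ((F a ω - r a ω) ^ 2 - (Fs a ω - r a ω) ^ 2) * χ a ω ∂μ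
          + 4 * ε^2 * ∫ ω, χ a ω ∂μ) :=
    Finset.sum_le_sum fun a _ => perarm a
  have hsplit2 : ∑ a : α, (2 * ∫ ω, ((F a ω - r a ω) ^ 2 - (Fs a ω - r a ω) ^ 2) * χ a ω ∂μ
          + 4 * ε^2 * ∫ ω, χ a ω ∂μ)
      = 2 * (∑ a : α, ∫ ω, ((F a ω - r a ω) ^ 2 - (Fs a ω - r a ω) ^ 2) * χ a ω ∂μ)
        + 4 * ε^2 * ∑ a : α, ∫ ω, χ a ω ∂μ := by
    rw [Finset.sum_add_distrib, ← Finset.mul_sum, ← Finset.mul_sum]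
  have hfinal1 : (4/(k:ℝ)) * ∑ a : α, ∫ ω, (d a ω)^2 * χ a ω ∂μ
      ≤ 8 * (∫ ω, Y ω ∂μ) + 16 * ε^2 := by
    have h1 : ∑ a : α, ∫ ω, (d a ω)^2 * χ a ω ∂μ
        ≤ 2 * (∑ a : α, ∫ ω, ((F a ω - r a ω) ^ 2 - (Fs a ω - r a ω) ^ 2) * χ a ω ∂μ)
          + 4 * ε^2 * (k:ℝ) := by
      have h2 : 4 * ε^2 * ∑ a : α, ∫ ω, χ a ω ∂μ ≤ 4 * ε^2 * (k:ℝ) :=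
        mul_le_mul_of_nonneg_left hsumC (by positivity)
      calc ∑ a : α, ∫ ω, (d a ω)^2 * χ a ω ∂μ
          ≤ 2 * (∑ a : α, ∫ ω, ((F a ω - r a ω) ^ 2 - (Fs a ω - r a ω) ^ 2) * χ a ω ∂μ)
            + 4 * ε^2 * ∑ a : α, ∫ ω, χ a ω ∂μ := hsumI.trans_eq hsplit2
      _ ≤ _ := by linarith
    have h3 : (4/(k:ℝ)) * ∑ a : α, ∫ ω, (d a ω)^2 * χ a ω ∂μ
        ≤ (4/(k:ℝ)) * (2 * (∑ a : α, ∫ ω, ((F a ω - r a ω) ^ 2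
            - (Fs a ω - r a ω) ^ 2) * χ a ω ∂μ) + 4 * ε^2 * (k:ℝ)) :=
      mul_le_mul_of_nonneg_left h1 (by positivity)
    have h4 : (4/(k:ℝ)) * (2 * (∑ a : α, ∫ ω, ((F a ω - r a ω) ^ 2
            - (Fs a ω - r a ω) ^ 2) * χ a ω ∂μ) + 4 * ε^2 * (k:ℝ))
        = 8 * ((1/(k:ℝ)) * ∑ a : α, ∫ ω, ((F a ω - r a ω) ^ 2
            - (Fs a ω - r a ω) ^ 2) * χ a ω ∂μ) + 16 * ε^2 := by
      field_simp
      ring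
    rw [hEY]
    linarith [h3, h4.le, h4.ge]
  calc variance Y μ ≤ ∫ ω, (Y ω)^2 ∂μ := hvar
  _ ≤ (4/(k:ℝ)) * ∑ a : α, ∫ ω, (d a ω)^2 * χ a ω ∂μ := hEY2
  _ ≤ 8 * (∫ ω, Y ω ∂μ) + 16 * ε^2 := hfinal1

end ExcessLossAux


/-- Variance bound for the per-round excess-loss random variable in the misspecified setting:
if `|E[r(a) | X] - f*(X, a)| ≤ ε` a.s. for every arm `a`, then `Var[Y] ≤ 8 E[Y] + 16 ε²`. -/
theorem excess_loss_variance_misspecified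
    {Ω 𝒳 α : Type*} [MeasurableSpace Ω] [StandardBorelSpace Ω] [Nonempty Ω]
    [MeasurableSpace 𝒳] [Fintype α]
    (μ : Measure Ω) [IsProbabilityMeasure μ]
    (k : ℕ) (hk : 1 ≤ k)
    (X : Ω → 𝒳) (hX : Measurable X)
    (r : α → Ω → ℝ) (hr_meas : ∀ a, Measurable (r a))
    (hr01 : ∀ a ω, r a ω ∈ Set.Icc (0 : ℝ) 1)
    (χ : α → Ω → ℝ) (hχ_meas : ∀ a, Measurable (χ a))
    (hχ01 : ∀ a ω, χ a ω = 0 ∨ χ a ω = 1)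
    (hsum : ∀ᵐ ω ∂μ, ∑ a : α, χ a ω ≤ (k : ℝ))
    (hcondindep : ∀ a : α, CondIndepFun (MeasurableSpace.comap X inferInstance)
      hX.comap_le (χ a) (r a) μ)
    (f fstar : 𝒳 → α → ℝ)
    (hf_meas : ∀ a, Measurable fun x => f x a)
    (hfstar_meas : ∀ a, Measurable fun x => fstar x a)
    (hf01 : ∀ x a, f x a ∈ Set.Icc (0 : ℝ) 1)
    (hfstar01 : ∀ x a, fstar x a ∈ Set.Icc (0 : ℝ) 1)
    (ε : ℝ) (hε : 0 ≤ ε)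
    (hmisspec : ∀ a : α, ∀ᵐ ω ∂μ,
      |(μ[r a | MeasurableSpace.comap X inferInstance]) ω - fstar (X ω) a| ≤ ε)
    (Y : Ω → ℝ)
    (hY : Y = fun ω => (1 / (k : ℝ)) *
      ∑ a : α, ((f (X ω) a - r a ω) ^ 2 - (fstar (X ω) a - r a ω) ^ 2) * χ a ω) :
    ProbabilityTheory.variance Y μ ≤ 8 * (∫ ω, Y ω ∂μ) + 16 * ε ^ 2 := by
  have hm : MeasurableSpace.comap X inferInstance ≤ ‹MeasurableSpace Ω› := hX.comap_le
  refine ExcessLossAux.main_aux (m := MeasurableSpace.comap X inferInstance) hm k hk r χ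
    hr_meas hr01 hχ_meas hχ01 hsum
    (fun a ω => f (X ω) a) (fun a ω => fstar (X ω) a)
    (fun a s hs => ⟨_, (hf_meas a) hs, rfl⟩) (fun a s hs => ⟨_, (hfstar_meas a) hs, rfl⟩)
    (fun a ω => hf01 (X ω) a) (fun a ω => hfstar01 (X ω) a)
    ε hε hmisspec ?_ Y hY
  intro a t ht
  have h := (condIndepFun_iff (m' := MeasurableSpace.comap X inferInstance) (hm' := hm)
    (f := χ a) (g := r a) (hχ_meas a) (hr_meas a) μ).1 (hcondindep a)
  exact h _ _ ⟨{1}, measurableSet_singleton 1, rfl⟩ ⟨t, ht, rfl⟩
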